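/- Let P be a compact topological space, V a finite-dimensional complex vector space, and V = E ⊕ F a direct sum decomposition into subspaces E and F. Let H, H' : P → (sesquilinear forms on V) be continuous families such that for every p ∈ P: H(p) and H'(p) are Hermitian, H(p) is positive definite on E, H'(p) is positive definite on F, and H'(p)(e,v) = 0 for all e ∈ E, v ∈ V. Then there exists a single real constant c > 0 such that H(p) + cH'(p) is positive definite on V for every p ∈ P. -/

import Mathlib

/-- Compact-family version of Statement 0: for a compact space `P` and
continuous families `H, H'` of Hermitian sesquilinear forms on a finite-dimensional
complex vector space `V = E ⊕ F`, with `H p` positive definite on `E`, `H' p` positive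
definite on `F` and `E ⊆ ker (H' p)` for every `p`, there is a single constant `c > 0`
such that `H p + c H' p` is positive definite on `V` for every `p ∈ P`. -/
theorem stmt_1 (P : Type*) [TopologicalSpace P] [CompactSpace P]
    (V : Type*) [AddCommGroup V] [Module ℂ V] [FiniteDimensional ℂ V]
    (E F : Submodule ℂ V) (hEF : IsCompl E F)
    (H H' : P → V →ₗ[ℂ] V →ₛₗ[starRingEnd ℂ] ℂ)
    (hHcont : ∀ v w : V, Continuous fun p => H p v w)
    (hH'cont : ∀ v w : V, Continuous fun p => H' p v w)
    (hHherm : ∀ p : P, ∀ u v : V, (starRingEnd ℂ) (H p u v) = H p v u)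
    (hH'herm : ∀ p : P, ∀ u v : V, (starRingEnd ℂ) (H' p u v) = H' p v u)
    (hHE : ∀ p : P, ∀ e ∈ E, e ≠ 0 → 0 < (H p e e).re)
    (hH'F : ∀ p : P, ∀ f ∈ F, f ≠ 0 → 0 < (H' p f f).re)
    (hker : ∀ p : P, ∀ e ∈ E, ∀ v : V, H' p e v = 0) :
    ∃ c : ℝ, 0 < c ∧ ∀ p : P, ∀ v : V, v ≠ 0 → 0 < (H p v v + (c : ℂ) * H' p v v).re := by
  classical
  -- decomposition lemma for H'
  have hH'eq : ∀ (p : P) (v : V), H' p v v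
      = H' p (F.projectionOnto E hEF.symm v) (F.projectionOnto E hEF.symm v) := by
    intro p v
    set e : V := (E.projectionOnto F hEF v : V)
    set f : V := (F.projectionOnto E hEF.symm v : V)
    have hv : e + f = v := Submodule.projection_add_projection_eq_self hEF v
    have he : e ∈ E := (E.projectionOnto F hEF v).2
    have h2 : H' p f e = 0 := by
      rw [← hH'herm p e f, hker p e he, map_zero]
    have h1 : H' p (e + f) (e + f) = H' p f f := by
      rw [show H' p (e + f) = H' p e + H' p f from map_add (H' p) e f,
        LinearMap.add_apply, hker p e he, zero_add, map_add, h2, zero_add]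
    rw [← hv]; exact h1
  -- semidefiniteness of H'
  have hQ'nonneg : ∀ (p : P) (v : V), 0 ≤ (H' p v v).re := by
    intro p v
    rw [hH'eq p v]
    set f : V := (F.projectionOnto E hEF.symm v : V)
    rcases eq_or_ne f 0 with hf | hf
    · simp [hf]
    · exact le_of_lt (hH'F p f (F.projectionOnto E hEF.symm v).2 hf)
  -- key pointwise dichotomy
  have hkey : ∀ (p : P) (v : V), v ≠ 0 → (H' p v v).re ≤ 0 → 0 < (H p v v).re := by
    intro p v hv hle
    set f : V := (F.projectionOnto E hEF.symm v : V) with hfdef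
    have hf : f = 0 := by
      by_contra hf
      have hpos : 0 < (H' p v v).re := by
        rw [hH'eq p v]
        exact hH'F p f (F.projectionOnto E hEF.symm v).2 hf
      exact absurd hle (not_le.mpr hpos)
    have hvE : v ∈ E := by
      have hvsum : (E.projectionOnto F hEF v : V) + f = v :=
        Submodule.projection_add_projection_eq_self hEF v
      rw [hf, add_zero] at hvsum
      rw [← hvsum]; exact (E.projectionOnto F hEF v).2
    exact hHE p v hvE hv
  -- coordinates
  set n := Module.finrank ℂ V with hn
  set b : Module.Basis (Fin n) ℂ V := Module.finBasis ℂ V with hb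
  set ev : (Fin n → ℂ) → V := fun x => b.equivFun.symm x with hev
  -- expansion
  have hexp : ∀ (G : P → V →ₗ[ℂ] V →ₛₗ[starRingEnd ℂ] ℂ) (p : P) (x : Fin n → ℂ),
      G p (ev x) (ev x) = ∑ i, ∑ j, x i * (starRingEnd ℂ) (x j) * G p (b i) (b j) := by
    intro G p x
    have h1 : ev x = ∑ i, x i • b i := b.equivFun_symm_apply x
    have l1 : G p (ev x) = ∑ i, x i • G p (b i) := by
      rw [h1, map_sum]
      exact Finset.sum_congr rfl fun i _ => (G p).map_smul _ _
    have l2 : ∀ i : Fin n, G p (b i) (ev x) = ∑ j, (starRingEnd ℂ) (x j) * G p (b i) (b j) := by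
      intro i
      rw [h1, map_sum]
      exact Finset.sum_congr rfl fun j _ => (G p (b i)).map_smulₛₗ _ _
    calc G p (ev x) (ev x) = (∑ i, x i • G p (b i)) (ev x) := by rw [l1]
      _ = ∑ i, x i * (G p (b i) (ev x)) := by
          rw [LinearMap.sum_apply]
          exact Finset.sum_congr rfl fun i _ => rfl
      _ = ∑ i, ∑ j, x i * (starRingEnd ℂ) (x j) * G p (b i) (b j) := by
          refine Finset.sum_congr rfl fun i _ => ?_
          rw [l2 i, Finset.mul_sum]
          exact Finset.sum_congr rfl fun j _ => by ring
  -- continuity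
  have hcont : ∀ (G : P → V →ₗ[ℂ] V →ₛₗ[starRingEnd ℂ] ℂ),
      (∀ v w : V, Continuous fun p => G p v w) →
      Continuous fun z : P × (Fin n → ℂ) => (G z.1 (ev z.2) (ev z.2)).re := by
    intro G hG
    have heq : (fun z : P × (Fin n → ℂ) => (G z.1 (ev z.2) (ev z.2)).re)
        = fun z => (∑ i, ∑ j, z.2 i * (starRingEnd ℂ) (z.2 j) * G z.1 (b i) (b j)).re := by
      funext z; rw [hexp G z.1 z.2]
    rw [heq]
    refine Complex.continuous_re.comp ?_
    refine continuous_finset_sum _ fun i _ => continuous_finset_sum _ fun j _ => ?_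
    exact (((continuous_apply i).comp continuous_snd).mul
      (Complex.continuous_conj.comp ((continuous_apply j).comp continuous_snd))).mul
      ((hG _ _).comp continuous_fst)
  set Q : P × (Fin n → ℂ) → ℝ := fun z => (H z.1 (ev z.2) (ev z.2)).re with hQ
  set Q' : P × (Fin n → ℂ) → ℝ := fun z => (H' z.1 (ev z.2) (ev z.2)).re with hQ'
  have hQcont : Continuous Q := hcont H hHcont
  have hQ'cont : Continuous Q' := hcont H' hH'cont
  -- nonzero on sphere
  have hevne : ∀ x : Fin n → ℂ, x ≠ 0 → ev x ≠ 0 := by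
    intro x hx h0
    exact hx (by simpa using b.equivFun.symm.injective (by simpa [hev] using h0))
  -- the compact set
  set S : Set (Fin n → ℂ) := Metric.sphere 0 1 with hS
  set K : Set (P × (Fin n → ℂ)) := Set.univ ×ˢ S with hK
  have hKcomp : IsCompact K := isCompact_univ.prod (isCompact_sphere 0 1)
  have hKsphere : ∀ z ∈ K, ‖z.2‖ = 1 := by
    intro z hz
    have : z.2 ∈ S := hz.2
    simpa [hS] using this
  set A : Set (P × (Fin n → ℂ)) := K ∩ Q ⁻¹' Set.Iic 0 with hA
  have hAcomp : IsCompact A := hKcomp.inter_right (isClosed_Iic.preimage hQcont)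
  have hAQ' : ∀ z ∈ A, 0 < Q' z := by
    rintro z ⟨hzK, hzQ⟩
    have hx : z.2 ≠ 0 := by
      intro h; have := hKsphere z hzK; rw [h] at this; simp at this
    by_contra h
    push_neg at h
    exact absurd (Set.mem_Iic.mp hzQ) (not_le.mpr (hkey z.1 (ev z.2) (hevne z.2 hx) h))
  have hQ'nn : ∀ z : P × (Fin n → ℂ), 0 ≤ Q' z := fun z => hQ'nonneg z.1 (ev z.2)
  -- main claim on sphere
  have hmain : ∃ c : ℝ, 0 < c ∧ ∀ z ∈ K, 0 < Q z + c * Q' z := by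
    rcases Set.eq_empty_or_nonempty A with hAe | hAne
    · refine ⟨1, one_pos, ?_⟩
      intro z hzK
      have hzQ : 0 < Q z := by
        by_contra h
        push_neg at h
        exact (Set.eq_empty_iff_forall_notMem.mp hAe z) ⟨hzK, h⟩
      have h2 := hQ'nn z
      linarith
    · obtain ⟨z0, hz0A, hz0⟩ := hAcomp.exists_isMinOn hAne hQcont.continuousOn
      obtain ⟨z1, hz1A, hz1⟩ := hAcomp.exists_isMinOn hAne hQ'cont.continuousOn
      set m : ℝ := Q z0 with hm
      set δ : ℝ := Q' z1 with hδ
      have hδpos : 0 < δ := hAQ' z1 hz1A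
      have hmle : m ≤ 0 := hz0A.2
      have hcpos : 0 < (1 - m) / δ := div_pos (by linarith) hδpos
      refine ⟨(1 - m) / δ, hcpos, ?_⟩
      intro z hzK
      have hQ'z : 0 ≤ Q' z := hQ'nn z
      rcases le_or_gt (Q z) 0 with hle | hlt
      · have hzA : z ∈ A := ⟨hzK, hle⟩
        have h1 : m ≤ Q z := hz0 hzA
        have h2 : δ ≤ Q' z := hz1 hzA
        have h3 : (1 - m) / δ * δ ≤ (1 - m) / δ * Q' z :=
          mul_le_mul_of_nonneg_left h2 hcpos.le
        rw [div_mul_cancel₀ _ hδpos.ne'] at h3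
        linarith
      · nlinarith [hQ'z]
  obtain ⟨c, hc, hcK⟩ := hmain
  refine ⟨c, hc, ?_⟩
  intro p v hv
  set x : Fin n → ℂ := b.equivFun v with hx
  have hxne : x ≠ 0 := by
    intro h
    exact hv (by simpa using b.equivFun.injective (by simpa [hx] using h))
  set t : ℝ := ‖x‖ with ht
  have htpos : 0 < t := norm_pos_iff.mpr hxne
  set y : Fin n → ℂ := (t : ℂ)⁻¹ • x with hy
  have hyS : (p, y) ∈ K := by
    constructor
    · trivial
    · simp only [hS, Metric.mem_sphere, dist_zero_right, hy, norm_smul]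
      rw [norm_inv, Complex.norm_real, Real.norm_eq_abs, abs_of_pos htpos]
      field_simp
      exact ht.symm
  have hevy : ev y = (t : ℂ)⁻¹ • v := by
    rw [hev]
    simp only [hy, map_smul]
    congr 1
    exact b.equivFun.symm_apply_apply v
  have hscale : ∀ (G : P → V →ₗ[ℂ] V →ₛₗ[starRingEnd ℂ] ℂ),
      G p (ev y) (ev y) = (((t : ℂ)⁻¹) * ((t : ℂ)⁻¹)) * G p v v := by
    intro G
    have s1 : G p (ev y) = (t : ℂ)⁻¹ • G p v := by
      rw [hevy]; exact (G p).map_smul _ _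
    have s2 : G p v (ev y) = (starRingEnd ℂ) ((t : ℂ)⁻¹) * G p v v := by
      rw [hevy]; exact (G p v).map_smulₛₗ _ _
    calc G p (ev y) (ev y) = (t : ℂ)⁻¹ * (G p v (ev y)) := by rw [s1]; rfl
      _ = (((t : ℂ)⁻¹) * ((t : ℂ)⁻¹)) * G p v v := by
          rw [s2, map_inv₀, Complex.conj_ofReal]; ring
  have hfin := hcK (p, y) hyS
  have hQy : Q (p, y) = t⁻¹ * t⁻¹ * (H p v v).re := by
    simp only [hQ, hscale H]
    rw [show ((t:ℂ)⁻¹ * (t:ℂ)⁻¹ : ℂ) = ((t⁻¹ * t⁻¹ : ℝ) : ℂ) by push_cast; ring,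
      Complex.re_ofReal_mul]
  have hQ'y : Q' (p, y) = t⁻¹ * t⁻¹ * (H' p v v).re := by
    simp only [hQ', hscale H']
    rw [show ((t:ℂ)⁻¹ * (t:ℂ)⁻¹ : ℂ) = ((t⁻¹ * t⁻¹ : ℝ) : ℂ) by push_cast; ring,
      Complex.re_ofReal_mul]
  rw [hQy, hQ'y] at hfin
  have hre : (H p v v + (c : ℂ) * H' p v v).re = (H p v v).re + c * (H' p v v).re := by
    rw [Complex.add_re, Complex.re_ofReal_mul]
  rw [hre]
  have ht2 : 0 < t⁻¹ * t⁻¹ := by positivity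
  nlinarith [hfin]
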